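/- Let s ≥ 1, ω0, ω1 ∈ ℝ, let b_0, …, b_s ∈ ℝ be nonzero, set a_j = 1 − b_j T_j(ω0), and take the RKC coefficients μ_j, ν_j, κ_j, γ_j. Let A and ΔA_1, …, ΔA_{s−1} be real n×n matrices, Δt ∈ ℝ, and ŷ ∈ ℝⁿ. Define d̂_0 = 0, d̂_1 = μ_1 Δt A ŷ, and d̂_j = ν_j d̂_{j−1} + κ_j d̂_{j−2} + μ_j Δt (A + ΔA_{j−1}) d̂_{j−1} + (μ_j + γ_j) Δt A ŷ for 2 ≤ j ≤ s. Define R_k(Δt A) = (1 − b_k T_k(ω0)) I + b_k T_k(ω0 I + ω1 Δt A). Then for every 1 ≤ k ≤ s: d̂_k = (R_k(Δt A) − I) ŷ + r_k, where r_k = 2 ω1 Δt Σ_{j=1}^{k−1} (b_k/b_j) U_{k−j−1}(ω0 I + ω1 Δt A) ΔA_j d̂_j. -/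

import Mathlib

noncomputable section

/-- Chebyshev polynomial of the first kind, evaluated in an arbitrary ring. -/
def chebT (R : Type*) [Ring R] : ℕ → R → R
  | 0, _ => 1
  | 1, x => x
  | n + 2, x => 2 * x * chebT R (n + 1) x - chebT R n x

/-- Chebyshev polynomial of the second kind, evaluated in an arbitrary ring. -/
def chebU (R : Type*) [Ring R] : ℕ → R → R
  | 0, _ => 1
  | 1, x => 2 * x
  | n + 2, x => 2 * x * chebU R (n + 1) x - chebU R n x

/-- Spectral norm of a real matrix: operator norm induced by the Euclidean norms. -/
def specNorm {m n : ℕ} (A : Matrix (Fin m) (Fin n) ℝ) : ℝ :=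
  ‖(Matrix.toEuclideanLin A).toContinuousLinearMap‖

lemma chebT_two (R : Type*) [Ring R] (x : R) (k : ℕ) :
    chebT R (k+2) x = 2 * x * chebT R (k+1) x - chebT R k x := rfl

lemma chebU_two (R : Type*) [Ring R] (x : R) (k : ℕ) :
    chebU R (k+2) x = 2 * x * chebU R (k+1) x - chebU R k x := rfl

lemma mulVec_sum' {n : ℕ} {ι : Type*} (A : Matrix (Fin n) (Fin n) ℝ) (s : Finset ι)
    (f : ι → Fin n → ℝ) :
    A.mulVec (∑ j ∈ s, f j) = ∑ j ∈ s, A.mulVec (f j) := map_sum A.mulVecLin f s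

set_option maxHeartbeats 2000000 in
/-- for the linear mixed-precision RKC recursion with perturbation matrices
`ΔA_j`, each stage satisfies `d̂_k = (R_k(Δt A) − I) ŷ + r_k` with
`r_k = 2 ω1 Δt Σ_{j=1}^{k−1} (b_k/b_j) U_{k−j−1}(ω0 I + ω1 Δt A) ΔA_j d̂_j`. -/
theorem mixed_precision_rkc_rounding_identity
    {n : ℕ} (s : ℕ) (hs : 1 ≤ s) (ω0 ω1 : ℝ) (b : ℕ → ℝ) (hb : ∀ j, j ≤ s → b j ≠ 0)
    (μ ν κ γ : ℕ → ℝ)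
    (hμ1 : μ 1 = b 1 * ω1)
    (hμ : ∀ j, 2 ≤ j → j ≤ s → μ j = 2 * ω1 * b j / b (j - 1))
    (hν : ∀ j, 2 ≤ j → j ≤ s → ν j = 2 * ω0 * b j / b (j - 1))
    (hκ : ∀ j, 2 ≤ j → j ≤ s → κ j = -(b j / b (j - 2)))
    (hγ : ∀ j, 2 ≤ j → j ≤ s → γ j = -(μ j * (1 - b (j - 1) * chebT ℝ (j - 1) ω0)))
    (A : Matrix (Fin n) (Fin n) ℝ) (ΔA : ℕ → Matrix (Fin n) (Fin n) ℝ)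
    (Δt : ℝ) (yhat : Fin n → ℝ)
    (dh : ℕ → (Fin n → ℝ))
    (hdh0 : dh 0 = 0) (hdh1 : dh 1 = (μ 1 * Δt) • A.mulVec yhat)
    (hdh : ∀ j, 2 ≤ j → j ≤ s →
      dh j = ν j • dh (j - 1) + κ j • dh (j - 2)
        + (μ j * Δt) • (A + ΔA (j - 1)).mulVec (dh (j - 1))
        + ((μ j + γ j) * Δt) • A.mulVec yhat) :
    ∀ k, 1 ≤ k → k ≤ s →
      dh k =
        (((1 - b k * chebT ℝ k ω0) • (1 : Matrix (Fin n) (Fin n) ℝ)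
            + b k • chebT (Matrix (Fin n) (Fin n) ℝ) k
                (ω0 • (1 : Matrix (Fin n) (Fin n) ℝ) + (ω1 * Δt) • A)
            - 1).mulVec yhat)
        + (2 * ω1 * Δt) • ∑ j ∈ Finset.Ico 1 k, (b k / b j) •
            ((chebU (Matrix (Fin n) (Fin n) ℝ) (k - j - 1)
                (ω0 • (1 : Matrix (Fin n) (Fin n) ℝ) + (ω1 * Δt) • A)
              * ΔA j).mulVec (dh j)) := by
  set Z : Matrix (Fin n) (Fin n) ℝ :=
    ω0 • (1 : Matrix (Fin n) (Fin n) ℝ) + (ω1 * Δt) • A with hZ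
  have key : ∀ k, k ≤ s →
      dh k = (b k • chebT (Matrix (Fin n) (Fin n) ℝ) k Z
              - (b k * chebT ℝ k ω0) • (1 : Matrix (Fin n) (Fin n) ℝ)).mulVec yhat
        + (2 * ω1 * Δt) • ∑ j ∈ Finset.Ico 1 k, (b k / b j) •
            ((chebU (Matrix (Fin n) (Fin n) ℝ) (k - j - 1) Z * ΔA j).mulVec (dh j)) := by
    intro k
    induction k using Nat.strong_induction_on with
    | _ k ih =>
      obtain _ | _ | m := k
      · intro _
        simp [hdh0, chebT]
      · intro h1s
        have hmat : b 1 • chebT (Matrix (Fin n) (Fin n) ℝ) 1 Z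
            - (b 1 * chebT ℝ 1 ω0) • (1 : Matrix (Fin n) (Fin n) ℝ)
            = (b 1 * ω1 * Δt) • A := by
          simp only [chebT, hZ]
          match_scalars <;> ring
        rw [hmat, hdh1, hμ1]
        simp [Matrix.smul_mulVec, mul_assoc]
      · intro hks
        simp only [Nat.succ_eq_add_one, show m + 1 + 1 = m + 2 from rfl]
        have hm1s : m + 1 ≤ s := by omega
        have hms : m ≤ s := by omega
        have ih1 := ih (m+1) (by omega) hm1s
        have ih0 := ih m (by omega) hms
        have hbm1 : b (m+1) ≠ 0 := hb _ hm1s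
        have hbm0 : b m ≠ 0 := hb _ hms
        have hrec := hdh (m+2) (by omega) hks
        have hμ2 := hμ (m+2) (by omega) hks
        have hν2 := hν (m+2) (by omega) hks
        have hκ2 := hκ (m+2) (by omega) hks
        have hγ2 := hγ (m+2) (by omega) hks
        simp only [show m + 2 - 1 = m + 1 from rfl, show m + 2 - 2 = m from rfl]
          at hrec hμ2 hν2 hκ2 hγ2
        have E1 : (ν (m+2) • (b (m+1) • chebT (Matrix (Fin n) (Fin n) ℝ) (m+1) Z
              - (b (m+1) * chebT ℝ (m+1) ω0) • (1 : Matrix (Fin n) (Fin n) ℝ))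
            + κ (m+2) • (b m • chebT (Matrix (Fin n) (Fin n) ℝ) m Z
              - (b m * chebT ℝ m ω0) • (1 : Matrix (Fin n) (Fin n) ℝ))
            + (μ (m+2) * Δt) • (A * (b (m+1) • chebT (Matrix (Fin n) (Fin n) ℝ) (m+1) Z
              - (b (m+1) * chebT ℝ (m+1) ω0) • (1 : Matrix (Fin n) (Fin n) ℝ)))
            + ((μ (m+2) + γ (m+2)) * Δt) • A)
            = b (m+2) • chebT (Matrix (Fin n) (Fin n) ℝ) (m+2) Z
              - (b (m+2) * chebT ℝ (m+2) ω0) • (1 : Matrix (Fin n) (Fin n) ℝ) := by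
          rw [hγ2, hν2, hκ2, hμ2, chebT_two, chebT_two, hZ]
          simp only [mul_sub, sub_mul, add_mul, mul_add, two_mul, smul_mul_assoc, mul_smul_comm,
            one_mul, mul_one]
          match_scalars <;> field_simp <;> ring
        have E1' : ν (m+2) • ((b (m+1) • chebT (Matrix (Fin n) (Fin n) ℝ) (m+1) Z
              - (b (m+1) * chebT ℝ (m+1) ω0) • (1 : Matrix (Fin n) (Fin n) ℝ)).mulVec yhat)
            + κ (m+2) • ((b m • chebT (Matrix (Fin n) (Fin n) ℝ) m Z
              - (b m * chebT ℝ m ω0) • (1 : Matrix (Fin n) (Fin n) ℝ)).mulVec yhat)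
            + (μ (m+2) * Δt) • A.mulVec ((b (m+1) • chebT (Matrix (Fin n) (Fin n) ℝ) (m+1) Z
              - (b (m+1) * chebT ℝ (m+1) ω0) • (1 : Matrix (Fin n) (Fin n) ℝ)).mulVec yhat)
            + ((μ (m+2) + γ (m+2)) * Δt) • A.mulVec yhat
            = (b (m+2) • chebT (Matrix (Fin n) (Fin n) ℝ) (m+2) Z
              - (b (m+2) * chebT ℝ (m+2) ω0) • (1 : Matrix (Fin n) (Fin n) ℝ)).mulVec yhat := by
          rw [Matrix.mulVec_mulVec]
          simp only [← Matrix.smul_mulVec, ← Matrix.add_mulVec]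
          rw [E1]
        have E2 : ν (m+2) • ((2 * ω1 * Δt) • ∑ j ∈ Finset.Ico 1 (m+1), (b (m+1) / b j) •
              ((chebU (Matrix (Fin n) (Fin n) ℝ) (m+1-j-1) Z * ΔA j).mulVec (dh j)))
            + κ (m+2) • ((2 * ω1 * Δt) • ∑ j ∈ Finset.Ico 1 m, (b m / b j) •
              ((chebU (Matrix (Fin n) (Fin n) ℝ) (m-j-1) Z * ΔA j).mulVec (dh j)))
            + (μ (m+2) * Δt) • A.mulVec ((2 * ω1 * Δt) • ∑ j ∈ Finset.Ico 1 (m+1),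
              (b (m+1) / b j) •
              ((chebU (Matrix (Fin n) (Fin n) ℝ) (m+1-j-1) Z * ΔA j).mulVec (dh j)))
            + (μ (m+2) * Δt) • (ΔA (m+1)).mulVec (dh (m+1))
            = (2 * ω1 * Δt) • ∑ j ∈ Finset.Ico 1 (m+2), (b (m+2) / b j) •
              ((chebU (Matrix (Fin n) (Fin n) ℝ) (m+2-j-1) Z * ΔA j).mulVec (dh j)) := by
          rw [hν2, hκ2, hμ2]
          rw [Finset.sum_Ico_succ_top (by omega : 1 ≤ m + 1)]
          rw [show m + 2 - (m+1) - 1 = 0 by omega]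
          simp only [chebU, one_mul]
          rw [Matrix.mulVec_smul, mulVec_sum']
          simp only [Matrix.mulVec_smul, Matrix.mulVec_mulVec]
          simp only [smul_add, Finset.smul_sum, smul_smul]
          have hextra : (2 * ω1 * b (m + 2) / b (m + 1) * Δt) • (ΔA (m + 1)).mulVec (dh (m + 1))
              = (2 * ω1 * Δt * (b (m + 2) / b (m + 1))) • (ΔA (m + 1)).mulVec (dh (m + 1)) := by
            congr 1
            field_simp
          have hsum : ∑ x ∈ Finset.Ico 1 (m + 1),
                (2 * ω0 * b (m + 2) / b (m + 1) * (2 * ω1 * Δt * (b (m + 1) / b x))) •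
                  (chebU (Matrix (Fin n) (Fin n) ℝ) (m + 1 - x - 1) Z * ΔA x).mulVec (dh x)
              + ∑ x ∈ Finset.Ico 1 m,
                (-(b (m + 2) / b m) * (2 * ω1 * Δt * (b m / b x))) •
                  (chebU (Matrix (Fin n) (Fin n) ℝ) (m - x - 1) Z * ΔA x).mulVec (dh x)
              + ∑ x ∈ Finset.Ico 1 (m + 1),
                (2 * ω1 * b (m + 2) / b (m + 1) * Δt * (2 * ω1 * Δt * (b (m + 1) / b x))) •
                  (A * (chebU (Matrix (Fin n) (Fin n) ℝ) (m + 1 - x - 1) Z * ΔA x)).mulVec (dh x)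
              = ∑ x ∈ Finset.Ico 1 (m + 1),
                (2 * ω1 * Δt * (b (m + 2) / b x)) •
                  (chebU (Matrix (Fin n) (Fin n) ℝ) (m + 2 - x - 1) Z * ΔA x).mulVec (dh x) := by
            rcases Nat.eq_zero_or_pos m with hm0 | hm0
            · subst hm0; simp
            · have hm1 : 1 ≤ m := hm0
              rw [Finset.sum_Ico_succ_top hm1, Finset.sum_Ico_succ_top hm1,
                Finset.sum_Ico_succ_top hm1]
              have hm : ∑ x ∈ Finset.Ico 1 m,
                    (2 * ω0 * b (m + 2) / b (m + 1) * (2 * ω1 * Δt * (b (m + 1) / b x))) •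
                      (chebU (Matrix (Fin n) (Fin n) ℝ) (m + 1 - x - 1) Z * ΔA x).mulVec (dh x)
                  + ∑ x ∈ Finset.Ico 1 m,
                    (-(b (m + 2) / b m) * (2 * ω1 * Δt * (b m / b x))) •
                      (chebU (Matrix (Fin n) (Fin n) ℝ) (m - x - 1) Z * ΔA x).mulVec (dh x)
                  + ∑ x ∈ Finset.Ico 1 m,
                    (2 * ω1 * b (m + 2) / b (m + 1) * Δt * (2 * ω1 * Δt * (b (m + 1) / b x))) •
                      (A * (chebU (Matrix (Fin n) (Fin n) ℝ) (m + 1 - x - 1) Z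
                        * ΔA x)).mulVec (dh x)
                  = ∑ x ∈ Finset.Ico 1 m,
                    (2 * ω1 * Δt * (b (m + 2) / b x)) •
                      (chebU (Matrix (Fin n) (Fin n) ℝ) (m + 2 - x - 1) Z * ΔA x).mulVec (dh x)
                  := by
                rw [← Finset.sum_add_distrib, ← Finset.sum_add_distrib]
                refine Finset.sum_congr rfl ?_
                intro j hj
                rw [Finset.mem_Ico] at hj
                have hbj : b j ≠ 0 := hb _ (by omega)
                rw [show m + 2 - j - 1 = (m - j - 1) + 2 by omega,
                  show m + 1 - j - 1 = (m - j - 1) + 1 by omega, chebU_two, hZ]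
                simp only [mul_sub, sub_mul, add_mul, mul_add, two_mul, smul_mul_assoc,
                  mul_smul_comm, one_mul, mul_one, mul_assoc, Matrix.sub_mulVec,
                  Matrix.add_mulVec, Matrix.smul_mulVec]
                match_scalars <;> field_simp <;> ring
              have htop :
                  (2 * ω0 * b (m + 2) / b (m + 1) * (2 * ω1 * Δt * (b (m + 1) / b m))) •
                      (chebU (Matrix (Fin n) (Fin n) ℝ) (m + 1 - m - 1) Z * ΔA m).mulVec (dh m)
                  + (2 * ω1 * b (m + 2) / b (m + 1) * Δt * (2 * ω1 * Δt * (b (m + 1) / b m))) •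
                      (A * (chebU (Matrix (Fin n) (Fin n) ℝ) (m + 1 - m - 1) Z
                        * ΔA m)).mulVec (dh m)
                  = (2 * ω1 * Δt * (b (m + 2) / b m)) •
                      (chebU (Matrix (Fin n) (Fin n) ℝ) (m + 2 - m - 1) Z * ΔA m).mulVec (dh m)
                  := by
                rw [show m + 1 - m - 1 = 0 by omega, show m + 2 - m - 1 = 1 by omega]
                simp only [chebU, one_mul, hZ]
                simp only [mul_sub, sub_mul, add_mul, mul_add, two_mul, smul_mul_assoc,
                  mul_smul_comm, one_mul, mul_one, mul_assoc, Matrix.sub_mulVec,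
                  Matrix.add_mulVec, Matrix.smul_mulVec]
                match_scalars <;> field_simp <;> ring
              rw [← hm, ← htop]
              abel
          rw [hextra, ← hsum]
        rw [hrec, Matrix.add_mulVec, smul_add, ih0]
        nth_rewrite 1 2 [ih1]
        rw [← E1', ← E2]
        simp only [smul_add, Matrix.mulVec_add]
        abel
  intro k _ hks
  have hmat : ((1 - b k * chebT ℝ k ω0) • (1 : Matrix (Fin n) (Fin n) ℝ)
      + b k • chebT (Matrix (Fin n) (Fin n) ℝ) k Z - 1)
      = b k • chebT (Matrix (Fin n) (Fin n) ℝ) k Z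
        - (b k * chebT ℝ k ω0) • (1 : Matrix (Fin n) (Fin n) ℝ) := by
    match_scalars <;> ring
  rw [hmat]
  exact key k hks
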